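/- Let n ≥ 2 and let w: Ω → ℝ be a C² function on a bounded domain Ω ⊂ ℂⁿ whose complex Hessian has eigenvalues in the closed cone Γ̄_{n-1} at every point, and which satisfies σ_{n-1}(∂∂̄w) + σ_n(∂∂̄w) ≥ 0 in Ω. Let v be a continuous viscosity supersolution of σ_{n-1} + σ_n = 0 in Ω. If w ≤ v on ∂Ω, then w ≤ v in Ω. -/

import Mathlib

open Real Finset

/-- The `k`-th elementary symmetric polynomial of `x : Fin n → ℝ`. -/
def esymm (n k : ℕ) (x : Fin n → ℝ) : ℝ :=
  ∑ s ∈ (Finset.univ : Finset (Fin n)).powersetCard k, ∏ i ∈ s, x i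

/-- Second directional derivative of `f` at `z` in the (real) directions `v`, `w`. -/
noncomputable def d2 (n : ℕ) (f : (Fin n → ℂ) → ℝ) (z v w : Fin n → ℂ) : ℝ :=
  fderiv ℝ (fun y => fderiv ℝ f y v) z w

/-- The complex Hessian matrix `(∂²f/∂z_α ∂z̄_β)` of a real-valued function on `ℂⁿ`,
expressed through real second derivatives:
`f_{α β̄} = ¼ (f_{x_α x_β} + f_{y_α y_β}) + (i/4)(f_{x_α y_β} - f_{y_α x_β})`. -/
noncomputable def cHess (n : ℕ) (f : (Fin n → ℂ) → ℝ) (z : Fin n → ℂ) :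
    Matrix (Fin n) (Fin n) ℂ := fun α β =>
  (1 / 4 : ℂ) *
    (((d2 n f z (Pi.single α 1) (Pi.single β 1) +
        d2 n f z (Pi.single α Complex.I) (Pi.single β Complex.I) : ℝ) : ℂ) +
      Complex.I *
        ((d2 n f z (Pi.single α 1) (Pi.single β Complex.I) -
          d2 n f z (Pi.single α Complex.I) (Pi.single β 1) : ℝ) : ℂ))

/-- `v` is a viscosity supersolution of `σ_{n-1} + σ_n = 0` in `Ω`: for every `C²`
function `φ` which is `(n-1)`-admissible in `Ω` (eigenvalues of its complex Hessian in
`Γ̄_{n-1}`) and every local maximum point `z₀ ∈ Ω` of `φ - v` on `Ω`, one has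
`σ_{n-1}(∂∂̄φ(z₀)) + σ_n(∂∂̄φ(z₀)) ≤ 0`. -/
def IsViscositySupersolution (n : ℕ) (v : (Fin n → ℂ) → ℝ) (Ω : Set (Fin n → ℂ)) : Prop :=
  ∀ φ : (Fin n → ℂ) → ℝ, ContDiff ℝ 2 φ →
    (∀ z ∈ Ω, ∃ h : (cHess n φ z).IsHermitian,
      ∀ k : ℕ, 1 ≤ k → k ≤ n - 1 → 0 ≤ esymm n k h.eigenvalues) →
    ∀ z₀ ∈ Ω, IsLocalMaxOn (fun z => φ z - v z) Ω z₀ →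
      ∀ h₀ : (cHess n φ z₀).IsHermitian,
        esymm n (n - 1) h₀.eigenvalues + esymm n n h₀.eigenvalues ≤ 0

/-! ### Auxiliary algebraic lemmas on elementary symmetric polynomials -/

section Algebra

open Polynomial

lemma esymm_zero (n : ℕ) (x : Fin n → ℝ) : esymm n 0 x = 1 := by
  simp [esymm]

lemma coeff_prod_X_add_C (n : ℕ) (f : Fin n → ℝ) {k : ℕ} (hk : k ≤ n) :
    (∏ i : Fin n, (X + C (f i))).coeff k = esymm n (n - k) f := by
  have h : k ≤ (Finset.univ : Finset (Fin n)).card := by simpa using hk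
  rw [Finset.prod_X_add_C_coeff _ _ h, esymm]
  simp

lemma esymm_shift (n : ℕ) (f : Fin n → ℝ) (ε : ℝ) {m : ℕ} (hm : m ≤ n) :
    esymm n (n - m) (fun i => f i + ε) =
      ∑ j ∈ Finset.range (n + 1), esymm n (n - j) f * (ε ^ (j - m) * (j.choose m)) := by
  have hq : (∏ i : Fin n, (X + C (f i + ε))) =
      (∏ i : Fin n, (X + C (f i))).comp (X + C ε) := by
    rw [Polynomial.prod_comp]
    congr 1
    funext i
    simp only [add_comp, X_comp, C_comp, C_add]
    ring
  have hdeg : (∏ i : Fin n, (X + C (f i))).natDegree < n + 1 := by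
    apply Nat.lt_succ_of_le
    calc (∏ i : Fin n, (X + C (f i))).natDegree
        ≤ ∑ i : Fin n, (X + C (f i)).natDegree := Polynomial.natDegree_prod_le _ _
      _ ≤ ∑ _i : Fin n, 1 := by
          apply Finset.sum_le_sum; intro i _; exact (Polynomial.natDegree_X_add_C _).le
      _ = n := by simp
  have hsum : (∏ i : Fin n, (X + C (f i))).comp (X + C ε) =
      ∑ j ∈ Finset.range (n + 1), C ((∏ i : Fin n, (X + C (f i))).coeff j) * (X + C ε) ^ j := by
    conv_lhs => rw [Polynomial.as_sum_range' _ _ hdeg]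
    rw [show ∀ p : ℝ[X], p.comp (X + C ε) = Polynomial.compRingHom (X + C ε) p from fun _ => rfl,
      map_sum]
    congr 1; funext j
    simp [Polynomial.compRingHom, Polynomial.monomial_comp]
  have := congrArg (fun p => Polynomial.coeff p m) (hq.trans hsum)
  simp only [Polynomial.finset_sum_coeff, Polynomial.coeff_C_mul,
    Polynomial.coeff_X_add_C_pow] at this
  rw [← coeff_prod_X_add_C n (fun i => f i + ε) hm, this]
  apply Finset.sum_congr rfl
  intro j hj
  rw [coeff_prod_X_add_C n f (Nat.lt_succ_iff.mp (Finset.mem_range.mp hj))]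

lemma esymm_nonneg_aux {n : ℕ} {f : Fin n → ℝ}
    (hf : ∀ j, 1 ≤ j → j ≤ n - 1 → 0 ≤ esymm n j f) {j : ℕ} (hj : j ≤ n - 1) :
    0 ≤ esymm n j f := by
  rcases Nat.eq_zero_or_pos j with h | h
  · subst h; rw [esymm_zero]; norm_num
  · exact hf j h hj

lemma esymm_shift_nonneg {n : ℕ} {f : Fin n → ℝ} {ε : ℝ} (hε : 0 ≤ ε)
    (hf : ∀ j, 1 ≤ j → j ≤ n - 1 → 0 ≤ esymm n j f) {k : ℕ} (hk1 : 1 ≤ k) (hk2 : k ≤ n - 1) :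
    0 ≤ esymm n k (fun i => f i + ε) := by
  have hkn : k ≤ n := le_trans hk2 (Nat.sub_le _ _)
  have hget : n - (n - k) = k := Nat.sub_sub_self hkn
  have hm1 : 1 ≤ n - k := by omega
  rw [← hget, esymm_shift n f ε (Nat.sub_le _ _)]
  apply Finset.sum_nonneg
  intro j hj
  rcases Nat.eq_zero_or_pos j with h | h
  · subst h
    simp [Nat.choose_eq_zero_of_lt hm1]
  · have : n - j ≤ n - 1 := by omega
    exact mul_nonneg (esymm_nonneg_aux hf this)
      (mul_nonneg (pow_nonneg hε _) (Nat.cast_nonneg _))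

lemma esymm_shift_pos {n : ℕ} (hn : 2 ≤ n) {f : Fin n → ℝ} {ε : ℝ} (hε : 0 < ε)
    (hf : ∀ j, 1 ≤ j → j ≤ n - 1 → 0 ≤ esymm n j f)
    (hf2 : 0 ≤ esymm n (n - 1) f + esymm n n f) :
    0 < esymm n (n - 1) (fun i => f i + ε) + esymm n n (fun i => f i + ε) := by
  have h1 : esymm n (n - 1) (fun i => f i + ε) =
      ∑ j ∈ Finset.range (n + 1), esymm n (n - j) f * (ε ^ (j - 1) * (j.choose 1)) :=
    esymm_shift n f ε (by omega)
  have h0 : esymm n n (fun i => f i + ε) =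
      ∑ j ∈ Finset.range (n + 1), esymm n (n - j) f * (ε ^ (j - 0) * (j.choose 0)) := by
    have := esymm_shift n f ε (Nat.zero_le n)
    simpa using this
  rw [h1, h0, ← Finset.sum_add_distrib]
  set g : ℕ → ℝ := fun j => esymm n (n - j) f * (ε ^ (j - 1) * (j.choose 1)) +
      esymm n (n - j) f * (ε ^ (j - 0) * (j.choose 0)) with hg
  obtain ⟨N, rfl⟩ : ∃ N, n = N + 2 := ⟨n - 2, by omega⟩
  have hsplit : ∑ j ∈ Finset.range (N + 2 + 1), g j
      = (∑ j ∈ Finset.range (N + 1), g (j + 2)) + g 1 + g 0 := by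
    rw [Finset.sum_range_succ' g (N + 2), Finset.sum_range_succ' (fun i => g (i + 1)) (N + 1)]
  rw [hsplit]
  have hgnn : ∀ j ∈ Finset.range (N + 1), 0 ≤ g (j + 2) := by
    intro j _
    have h : N + 2 - (j + 2) ≤ N + 2 - 1 := by omega
    have he := esymm_nonneg_aux hf h
    apply add_nonneg <;>
      exact mul_nonneg he (mul_nonneg (pow_nonneg hε.le _) (Nat.cast_nonneg _))
  have hlast : g (N + 2) ≤ ∑ j ∈ Finset.range (N + 1), g (j + 2) := by
    have := Finset.single_le_sum hgnn (by simp : N ∈ Finset.range (N + 1))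
    simpa using this
  have hgN : g (N + 2) = ε ^ (N + 1) * (N + 2) + ε ^ (N + 2) := by
    simp [hg, esymm_zero]
  have hg0 : g 0 = esymm (N + 2) (N + 2) f := by simp [hg]
  have hg1 : g 1 = esymm (N + 2) (N + 1) f * (1 + ε) := by
    have : N + 2 - 1 = N + 1 := by omega
    simp [hg, this]; ring
  have hev : 0 ≤ esymm (N + 2) (N + 1) f := esymm_nonneg_aux hf (by omega)
  have h2 : (0:ℝ) < ε ^ (N + 1) * (N + 2) + ε ^ (N + 2) := by positivity
  have hf2' : 0 ≤ esymm (N + 2) (N + 1) f + esymm (N + 2) (N + 2) f := by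
    have : N + 2 - 1 = N + 1 := by omega
    rw [this] at hf2; exact hf2
  calc (0:ℝ) < (ε ^ (N + 1) * (N + 2) + ε ^ (N + 2))
        + (esymm (N + 2) (N + 1) f + esymm (N + 2) (N + 2) f) + ε * esymm (N + 2) (N + 1) f := by
        positivity
    _ ≤ (∑ j ∈ Finset.range (N + 1), g (j + 2)) + g 1 + g 0 := by
        rw [hg1, hg0]
        have := le_trans (le_of_eq hgN.symm) hlast
        nlinarith [this]

lemma esymm_congr_multiset {n k : ℕ} (x y : Fin n → ℝ)
    (h : Multiset.map x Finset.univ.val = Multiset.map y Finset.univ.val) :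
    esymm n k x = esymm n k y := by
  have hx : esymm n k x = (Multiset.map x Finset.univ.val).esymm k := by
    rw [Finset.esymm_map_val]; rfl
  have hy : esymm n k y = (Multiset.map y Finset.univ.val).esymm k := by
    rw [Finset.esymm_map_val]; rfl
  rw [hx, hy, h]

end Algebra

/-! ### Eigenvalues of `A + ε•1` for a Hermitian matrix -/

section Eigen

open Matrix

lemma herm_add_smul_one {n : ℕ} {A : Matrix (Fin n) (Fin n) ℂ} (hA : A.IsHermitian) (ε : ℝ) :
    (A + (ε : ℂ) • 1).IsHermitian := by
  rw [Matrix.IsHermitian, Matrix.conjTranspose_add, hA.eq, Matrix.conjTranspose_smul,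
    Matrix.conjTranspose_one]
  congr 1
  simp [Complex.star_def, Complex.conj_ofReal]

lemma eigenvalues_congr {n : ℕ} {A B : Matrix (Fin n) (Fin n) ℂ} (h : A = B)
    (hA : A.IsHermitian) (hB : B.IsHermitian) : hA.eigenvalues = hB.eigenvalues := by
  subst h; rfl

lemma det_smul_one_sub (n : ℕ) (A : Matrix (Fin n) (Fin n) ℂ) (hA : A.IsHermitian) (t : ℝ) :
    ((t : ℂ) • 1 - A).det = ∏ i, ((t : ℂ) - hA.eigenvalues i) := by
  set U : Matrix (Fin n) (Fin n) ℂ :=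
    (Matrix.IsHermitian.eigenvectorUnitary hA : Matrix (Fin n) (Fin n) ℂ) with hU
  have hUU : U * star U = 1 :=
    (Matrix.mem_unitaryGroup_iff).mp (Matrix.IsHermitian.eigenvectorUnitary hA).2
  have h1 : (t : ℂ) • (1 : Matrix (Fin n) (Fin n) ℂ) - A
      = U * ((t : ℂ) • 1 - Matrix.diagonal (RCLike.ofReal ∘ hA.eigenvalues)) * star U := by
    rw [Matrix.mul_sub, Matrix.sub_mul]
    congr 1
    · rw [Matrix.mul_smul, Matrix.smul_mul, mul_one, hUU]
    · conv_lhs => rw [hA.spectral_theorem]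
      rw [Unitary.conjStarAlgAut_apply]
  rw [h1, Matrix.det_mul, Matrix.det_mul]
  have h2 : U.det * ((t : ℂ) • (1 : Matrix (Fin n) (Fin n) ℂ)
        - Matrix.diagonal (RCLike.ofReal ∘ hA.eigenvalues)).det * (star U).det
      = ((t : ℂ) • (1 : Matrix (Fin n) (Fin n) ℂ)
        - Matrix.diagonal (RCLike.ofReal ∘ hA.eigenvalues)).det * (U.det * (star U).det) := by
    ring
  rw [h2, ← Matrix.det_mul, hUU, Matrix.det_one, mul_one]
  have h3 : (t : ℂ) • (1 : Matrix (Fin n) (Fin n) ℂ)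
        - Matrix.diagonal (RCLike.ofReal ∘ hA.eigenvalues)
      = Matrix.diagonal (fun i => (t : ℂ) - hA.eigenvalues i) := by
    rw [Matrix.smul_one_eq_diagonal, Matrix.diagonal_sub]
    congr 1
  rw [h3, Matrix.det_diagonal]

lemma eig_shift (n : ℕ) (A : Matrix (Fin n) (Fin n) ℂ) (hA : A.IsHermitian) (ε : ℝ)
    (hA' : (A + (ε : ℂ) • 1).IsHermitian) :
    Multiset.map hA'.eigenvalues Finset.univ.val
      = Multiset.map (fun i => hA.eigenvalues i + ε) Finset.univ.val := by
  have key : ∀ t : ℝ, ∏ i, (t - hA'.eigenvalues i) = ∏ i, (t - (hA.eigenvalues i + ε)) := by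
    intro t
    have hc : ((t : ℂ) • (1 : Matrix (Fin n) (Fin n) ℂ) - (A + (ε : ℂ) • 1))
        = (((t - ε : ℝ) : ℂ)) • (1 : Matrix (Fin n) (Fin n) ℂ) - A := by
      push_cast
      rw [sub_smul]
      abel
    have e1 := det_smul_one_sub n (A + (ε : ℂ) • 1) hA' t
    rw [hc, det_smul_one_sub n A hA (t - ε)] at e1
    have e2 : ((∏ i, (t - hA'.eigenvalues i) : ℝ) : ℂ)
        = ((∏ i, (t - (hA.eigenvalues i + ε)) : ℝ) : ℂ) := by
      push_cast
      rw [← e1]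
      apply Finset.prod_congr rfl
      intro i _
      push_cast
      ring
    exact_mod_cast e2
  have hpoly : (Multiset.map (fun a => Polynomial.X - Polynomial.C a)
        (Multiset.map hA'.eigenvalues Finset.univ.val)).prod
      = (Multiset.map (fun a => Polynomial.X - Polynomial.C a)
        (Multiset.map (fun i => hA.eigenvalues i + ε) Finset.univ.val)).prod := by
    apply Polynomial.funext
    intro t
    rw [Multiset.map_map, Multiset.map_map]
    have : ∀ g : Fin n → ℝ,
        (Multiset.map (fun i => Polynomial.X - Polynomial.C (g i)) Finset.univ.val).prod.eval t
        = ∏ i, (t - g i) := by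
      intro g
      rw [← Finset.prod_eq_multiset_prod, Polynomial.eval_prod]
      simp
    rw [show ((fun a => Polynomial.X - Polynomial.C a) ∘ hA'.eigenvalues)
        = fun i => Polynomial.X - Polynomial.C (hA'.eigenvalues i) from rfl,
      show ((fun a => Polynomial.X - Polynomial.C a) ∘ (fun i => hA.eigenvalues i + ε))
        = fun i => Polynomial.X - Polynomial.C (hA.eigenvalues i + ε) from rfl,
      this, this, key]
  calc Multiset.map hA'.eigenvalues Finset.univ.val
      = (Multiset.map (fun a => Polynomial.X - Polynomial.C a)
          (Multiset.map hA'.eigenvalues Finset.univ.val)).prod.roots :=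
        (Polynomial.roots_multiset_prod_X_sub_C _).symm
    _ = (Multiset.map (fun a => Polynomial.X - Polynomial.C a)
          (Multiset.map (fun i => hA.eigenvalues i + ε) Finset.univ.val)).prod.roots := by
        rw [hpoly]
    _ = _ := Polynomial.roots_multiset_prod_X_sub_C _

end Eigen

/-! ### The quadratic `Σ |z_i|²` and its complex Hessian -/

section Quadratic

noncomputable def Acl (n : ℕ) (i : Fin n) : (Fin n → ℂ) →L[ℝ] ℝ :=
  Complex.reCLM.comp (ContinuousLinearMap.proj i)

noncomputable def Bcl (n : ℕ) (i : Fin n) : (Fin n → ℂ) →L[ℝ] ℝ :=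
  Complex.imCLM.comp (ContinuousLinearMap.proj i)

noncomputable def Lq (n : ℕ) : (Fin n → ℂ) →L[ℝ] ((Fin n → ℂ) →L[ℝ] ℝ) :=
  ∑ i : Fin n, ((2:ℝ) • ((Acl n i).smulRight (Acl n i)) + (2:ℝ) • ((Bcl n i).smulRight (Bcl n i)))

lemma Lq_apply (n : ℕ) (u v : Fin n → ℂ) :
    Lq n u v = ∑ i : Fin n, (2 * ((u i).re * (v i).re) + 2 * ((u i).im * (v i).im)) := by
  simp [Lq, Acl, Bcl, ContinuousLinearMap.sum_apply]

noncomputable def qfun (n : ℕ) (y : Fin n → ℂ) : ℝ :=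
  ∑ i : Fin n, ((y i).re * (y i).re + (y i).im * (y i).im)

lemma qfun_nonneg (n : ℕ) (y : Fin n → ℂ) : 0 ≤ qfun n y := by
  apply Finset.sum_nonneg
  intro i _
  nlinarith [sq_nonneg (y i).re, sq_nonneg (y i).im]

lemma qfun_contDiff (n : ℕ) : ContDiff ℝ 2 (qfun n) := by
  apply ContDiff.sum
  intro i _
  have hre : ContDiff ℝ 2 (fun y : Fin n → ℂ => (y i).re) := (Acl n i).contDiff
  have him : ContDiff ℝ 2 (fun y : Fin n → ℂ => (y i).im) := (Bcl n i).contDiff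
  exact (hre.mul hre).add (him.mul him)

lemma qfun_hasFDerivAt (n : ℕ) (y : Fin n → ℂ) : HasFDerivAt (qfun n) (Lq n y) y := by
  have h : HasFDerivAt (qfun n)
      (∑ i : Fin n, (((Acl n i y) • (Acl n i) + (Acl n i y) • (Acl n i)) +
        ((Bcl n i y) • (Bcl n i) + (Bcl n i y) • (Bcl n i)))) y := by
    apply HasFDerivAt.fun_sum
    intro i _
    have ha : HasFDerivAt (fun y : Fin n → ℂ => (Acl n i) y) (Acl n i) y :=
      (Acl n i).hasFDerivAt
    have hb : HasFDerivAt (fun y : Fin n → ℂ => (Bcl n i) y) (Bcl n i) y :=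
      (Bcl n i).hasFDerivAt
    exact (ha.mul ha).add (hb.mul hb)
  convert h using 1
  ext u
  simp [Lq, ContinuousLinearMap.sum_apply, Acl, Bcl]
  apply Finset.sum_congr rfl
  intro x _
  ring

lemma d2_qfun (n : ℕ) (z v u : Fin n → ℂ) : d2 n (qfun n) z v u = Lq n u v := by
  have h1 : (fun y => fderiv ℝ (qfun n) y v) = fun y => ((Lq n).flip v) y := by
    funext y
    rw [(qfun_hasFDerivAt n y).fderiv]
    rfl
  rw [d2, h1, ContinuousLinearMap.fderiv]
  rfl

lemma cHess_qfun (n : ℕ) (z : Fin n → ℂ) :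
    cHess n (qfun n) z = (1 : Matrix (Fin n) (Fin n) ℂ) := by
  funext α β
  simp only [cHess, d2_qfun, Lq_apply, Matrix.one_apply]
  simp [Pi.single_apply, apply_ite Complex.re, apply_ite Complex.im, ite_mul, mul_ite,
    Finset.sum_ite_eq]
  by_cases h : α = β <;> by_cases h' : β = α <;> simp_all <;> norm_num

lemma fderiv_apply_differentiableAt {n : ℕ} {f : (Fin n → ℂ) → ℝ} (hf : ContDiff ℝ 2 f)
    (v z : Fin n → ℂ) : DifferentiableAt ℝ (fun y => fderiv ℝ f y v) z := by
  have h1 : ContDiff ℝ 1 (fderiv ℝ f) := hf.fderiv_right (by norm_num)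
  have h2 : ContDiff ℝ 1 (fun y => fderiv ℝ f y v) := h1.clm_apply contDiff_const
  exact (h2.differentiable one_ne_zero) z

lemma d2_combo {n : ℕ} {f g : (Fin n → ℂ) → ℝ} (hf : ContDiff ℝ 2 f) (hg : ContDiff ℝ 2 g)
    (ε : ℝ) (z v u : Fin n → ℂ) :
    d2 n (fun y => f y + ε * g y) z v u = d2 n f z v u + ε * d2 n g z v u := by
  have hdf : Differentiable ℝ f := hf.differentiable two_ne_zero
  have hdg : Differentiable ℝ g := hg.differentiable two_ne_zero
  have h1 : (fun y => fderiv ℝ (fun y => f y + ε * g y) y v)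
      = fun y => fderiv ℝ f y v + ε * fderiv ℝ g y v := by
    funext y
    rw [fderiv_fun_add (hdf y) (((hdg y).const_mul ε)), fderiv_const_mul (hdg y)]
    simp
  rw [d2, h1]
  have h2 := fderiv_apply_differentiableAt hf v z
  have h3 := fderiv_apply_differentiableAt hg v z
  rw [fderiv_fun_add h2 (h3.const_mul ε), fderiv_const_mul h3]
  simp [d2]

lemma cHess_combo {n : ℕ} {f g : (Fin n → ℂ) → ℝ} (hf : ContDiff ℝ 2 f) (hg : ContDiff ℝ 2 g)
    (ε : ℝ) (z : Fin n → ℂ) :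
    cHess n (fun y => f y + ε * g y) z = cHess n f z + (ε : ℂ) • cHess n g z := by
  funext α β
  simp only [cHess, d2_combo hf hg, Matrix.add_apply, Matrix.smul_apply, smul_eq_mul]
  push_cast
  ring

end Quadratic

theorem stmt_15 (n : ℕ) (hn : 2 ≤ n) (Ω : Set (Fin n → ℂ))
    (hΩo : IsOpen Ω) (hΩb : Bornology.IsBounded Ω)
    (w v : (Fin n → ℂ) → ℝ)
    (hw : ContDiff ℝ 2 w)
    (hwadm : ∀ z ∈ Ω, ∃ h : (cHess n w z).IsHermitian,
      (∀ k : ℕ, 1 ≤ k → k ≤ n - 1 → 0 ≤ esymm n k h.eigenvalues) ∧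
      0 ≤ esymm n (n - 1) h.eigenvalues + esymm n n h.eigenvalues)
    (hvc : ContinuousOn v (closure Ω))
    (hv : IsViscositySupersolution n v Ω)
    (hbdry : ∀ z ∈ frontier Ω, w z ≤ v z) :
    ∀ z ∈ Ω, w z ≤ v z := by
  intro z hz
  by_contra hcon
  push_neg at hcon
  set δ := w z - v z with hδ
  have hδpos : 0 < δ := by simp [hδ]; linarith
  have hK : IsCompact (closure Ω) :=
    Metric.isCompact_of_isClosed_isBounded isClosed_closure hΩb.closure
  have hzK : z ∈ closure Ω := subset_closure hz
  obtain ⟨y₀, hy₀K, hy₀max⟩ := hK.exists_isMaxOn ⟨z, hzK⟩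
    ((qfun_contDiff n).continuous.continuousOn)
  set R := qfun n y₀ with hR
  have hR0 : 0 ≤ R := le_trans (qfun_nonneg n z) (hy₀max hzK)
  set ε := δ / (2 * (R + 1)) with hε
  have hεpos : 0 < ε := by positivity
  have hεR : ε * R < δ := by
    have h1 : ε * (R + 1) = δ / 2 := by
      rw [hε]; field_simp
    nlinarith
  set φ := fun y => w y + ε * qfun n y with hφ
  have hφC : ContDiff ℝ 2 φ := hw.add (contDiff_const.mul (qfun_contDiff n))
  have hφHess : ∀ y, cHess n φ y = cHess n w y + (ε : ℂ) • 1 := by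
    intro y
    rw [hφ, cHess_combo hw (qfun_contDiff n) ε y, cHess_qfun]
  have hcont : ContinuousOn (fun y => φ y - v y) (closure Ω) :=
    (hφC.continuous.continuousOn).sub hvc
  obtain ⟨z₀, hz₀K, hz₀max⟩ := hK.exists_isMaxOn ⟨z, hzK⟩ hcont
  have hzval : δ ≤ φ z - v z := by
    have := qfun_nonneg n z
    simp only [hφ, hδ]
    nlinarith
  have hz₀Ω : z₀ ∈ Ω := by
    by_contra h
    have hfr : z₀ ∈ frontier Ω := by
      refine ⟨hz₀K, ?_⟩
      rwa [hΩo.interior_eq]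
    have hb := hbdry z₀ hfr
    have hq : qfun n z₀ ≤ R := hy₀max hz₀K
    have h1 : φ z₀ - v z₀ ≤ ε * R := by
      simp only [hφ]
      nlinarith
    have h2 : φ z - v z ≤ φ z₀ - v z₀ := hz₀max hzK
    linarith
  have hlmax : IsLocalMaxOn (fun y => φ y - v y) Ω z₀ := by
    apply eventually_nhdsWithin_of_forall
    intro y hy
    exact hz₀max (subset_closure hy)
  -- shifted eigenvalue facts at a point of Ω
  have hkey : ∀ y ∈ Ω, ∃ h : (cHess n φ y).IsHermitian,
      (∀ k : ℕ, 1 ≤ k → k ≤ n - 1 → 0 ≤ esymm n k h.eigenvalues) ∧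
      0 < esymm n (n - 1) h.eigenvalues + esymm n n h.eigenvalues := by
    intro y hy
    obtain ⟨hA, hA1, hA2⟩ := hwadm y hy
    have hherm' : (cHess n w y + (ε : ℂ) • 1).IsHermitian := herm_add_smul_one hA ε
    have hherm : (cHess n φ y).IsHermitian := by
      rw [hφHess y]; exact hherm'
    have heig : hherm.eigenvalues = hherm'.eigenvalues :=
      eigenvalues_congr (hφHess y) hherm hherm'
    have hmult := eig_shift n (cHess n w y) hA ε hherm'
    refine ⟨hherm, ?_, ?_⟩
    · intro k hk1 hk2
      rw [heig, esymm_congr_multiset _ _ hmult]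
      exact esymm_shift_nonneg hεpos.le hA1 hk1 hk2
    · rw [heig, esymm_congr_multiset _ _ hmult, esymm_congr_multiset _ _ hmult]
      exact esymm_shift_pos hn hεpos hA1 hA2
  obtain ⟨h₀, hadm₀, hpos₀⟩ := hkey z₀ hz₀Ω
  have hle := hv φ hφC (fun y hy => ⟨(hkey y hy).choose, (hkey y hy).choose_spec.1⟩)
    z₀ hz₀Ω hlmax h₀
  linarith
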